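/- For every λ > 0 there exists C > 0 such that for all x, y, t ∈ (0,∞), |∂_t P_t^λ(x,y)| ≤ (C/t) · P_t^λ(x,y). -/

import Mathlib

open Real MeasureTheory Set Filter

/-- The Bessel Poisson kernel `P_t^λ(x,y)`. -/
noncomputable def besselPoissonKernel (lam x y t : ℝ) : ℝ :=
  (2 * lam / π) * t * (x * y) ^ lam *
    ∫ θ in (0:ℝ)..π,
      (Real.sin θ) ^ (2 * lam - 1) /
        ((x - y) ^ 2 + t ^ 2 + 2 * x * y * (1 - Real.cos θ)) ^ (lam + 1)


section BesselAux
open intervalIntegral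

lemma sin_rpow_ii {p : ℝ} (hp : -1 < p) :
    IntervalIntegrable (fun θ => Real.sin θ ^ p) volume 0 π := by
  have hmeas : ∀ a b : ℝ, AEStronglyMeasurable (fun θ => Real.sin θ ^ p)
      (volume.restrict (Set.uIoc a b)) :=
    fun a b => (Real.measurable_sin.pow_const p).aestronglyMeasurable
  rcases le_or_gt 0 p with hp0 | hp0
  · refine (_root_.intervalIntegrable_const (c := (1:ℝ)) (μ := volume) (a := 0) (b := π)).mono_fun (hmeas 0 π) ?_
    rw [uIoc_of_le pi_pos.le]
    refine (ae_restrict_iff' measurableSet_Ioc).mpr (ae_of_all _ fun θ hθ => ?_)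
    have h1 : Real.sin θ ^ p ≤ 1 :=
      Real.rpow_le_one (Real.sin_nonneg_of_nonneg_of_le_pi hθ.1.le hθ.2)
        (Real.sin_le_one θ) hp0
    have h2 : (0:ℝ) ≤ Real.sin θ ^ p :=
      Real.rpow_nonneg (Real.sin_nonneg_of_nonneg_of_le_pi hθ.1.le hθ.2) p
    show ‖Real.sin θ ^ p‖ ≤ ‖(1:ℝ)‖
    rw [Real.norm_eq_abs, abs_of_nonneg h2]
    simpa using h1
  · have half1 : IntervalIntegrable (fun θ => Real.sin θ ^ p) volume 0 (π/2) := by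
      have hg : IntervalIntegrable (fun θ : ℝ => (2/π)^p * θ ^ p) volume 0 (π/2) :=
        (intervalIntegral.intervalIntegrable_rpow' hp).const_mul _
      refine hg.mono_fun' (hmeas 0 (π/2)) ?_
      rw [uIoc_of_le (by positivity : (0:ℝ) ≤ π/2)]
      refine (ae_restrict_iff' measurableSet_Ioc).mpr (ae_of_all _ fun θ hθ => ?_)
      have hθ0 : 0 < θ := hθ.1
      have hsin : 2/π * θ ≤ Real.sin θ := Real.mul_le_sin hθ0.le hθ.2
      have hpos : 0 < 2/π * θ := by positivity
      have h1 : Real.sin θ ^ p ≤ (2/π * θ) ^ p :=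
        Real.rpow_le_rpow_of_nonpos hpos hsin hp0.le
      have h2 : (0:ℝ) ≤ Real.sin θ ^ p := Real.rpow_nonneg
        (Real.sin_nonneg_of_nonneg_of_le_pi hθ0.le (hθ.2.trans (by linarith [pi_pos]))) p
      show ‖Real.sin θ ^ p‖ ≤ (2/π)^p * θ ^ p
      rw [Real.norm_eq_abs, abs_of_nonneg h2]
      calc Real.sin θ ^ p ≤ (2/π * θ) ^ p := h1
        _ = (2/π)^p * θ ^ p := Real.mul_rpow (by positivity) hθ0.le
    have half2 : IntervalIntegrable (fun θ => Real.sin θ ^ p) volume (π/2) π := by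
      have := half1.comp_sub_left π
      simp only [Real.sin_pi_sub] at this
      have heq : π - π/2 = π/2 := by ring
      rw [heq, sub_zero] at this
      exact this.symm
    exact half1.trans half2

noncomputable def bpK (x y θ : ℝ) : ℝ := (x - y) ^ 2 + 2 * x * y * (1 - Real.cos θ)

noncomputable def bpF (lam x y s θ : ℝ) : ℝ :=
  Real.sin θ ^ (2 * lam - 1) * (bpK x y θ + s ^ 2) ^ (-(lam + 1))

noncomputable def bpF' (lam x y s θ : ℝ) : ℝ :=
  Real.sin θ ^ (2 * lam - 1) *
    (2 * s * -(lam + 1) * (bpK x y θ + s ^ 2) ^ (-(lam + 1) - 1))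

section

variable {lam x y : ℝ}

lemma bpK_nonneg (hx : 0 < x) (hy : 0 < y) (θ : ℝ) : 0 ≤ bpK x y θ := by
  have := Real.cos_le_one θ
  have := sq_nonneg (x - y)
  have := mul_pos hx hy
  unfold bpK; nlinarith

lemma bpD_pos (hx : 0 < x) (hy : 0 < y) {s : ℝ} (hs : s ≠ 0) (θ : ℝ) :
    0 < bpK x y θ + s ^ 2 :=
  add_pos_of_nonneg_of_pos (bpK_nonneg hx hy θ) (by positivity)

lemma bpF_meas (hx : 0 < x) (hy : 0 < y) (s : ℝ) :
    AEStronglyMeasurable (bpF lam x y s) (volume.restrict (Set.uIoc (0:ℝ) π)) := by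
  apply Measurable.aestronglyMeasurable
  have hB : Measurable fun θ : ℝ => bpK x y θ + s ^ 2 := by
    unfold bpK; fun_prop
  exact (Real.measurable_sin.pow_const _).mul (hB.pow_const _)

lemma bpF'_meas (hx : 0 < x) (hy : 0 < y) (s : ℝ) :
    AEStronglyMeasurable (bpF' lam x y s) (volume.restrict (Set.uIoc (0:ℝ) π)) := by
  apply Measurable.aestronglyMeasurable
  have hB : Measurable fun θ : ℝ => bpK x y θ + s ^ 2 := by
    unfold bpK; fun_prop
  exact (Real.measurable_sin.pow_const _).mul
    ((measurable_const.mul (hB.pow_const _)))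

lemma bpF_nonneg (hx : 0 < x) (hy : 0 < y) (s θ : ℝ) (hθ : θ ∈ Icc (0:ℝ) π) :
    0 ≤ bpF lam x y s θ := by
  unfold bpF
  exact mul_nonneg (Real.rpow_nonneg (Real.sin_nonneg_of_nonneg_of_le_pi hθ.1 hθ.2) _)
    (Real.rpow_nonneg (add_nonneg (bpK_nonneg hx hy θ) (sq_nonneg s)) _)

lemma bpF_int (hlam : 0 < lam) (hx : 0 < x) (hy : 0 < y) {s : ℝ} (hs : s ≠ 0) :
    IntervalIntegrable (bpF lam x y s) volume 0 π := by
  have h2 : -1 < 2 * lam - 1 := by linarith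
  refine ((sin_rpow_ii h2).const_mul ((s ^ 2) ^ (-(lam + 1)))).mono_fun'
    (bpF_meas hx hy s) ?_
  rw [uIoc_of_le pi_pos.le]
  refine (ae_restrict_iff' measurableSet_Ioc).mpr (ae_of_all _ fun θ hθ => ?_)
  have hsin : 0 ≤ Real.sin θ := Real.sin_nonneg_of_nonneg_of_le_pi hθ.1.le hθ.2
  have hb : (bpK x y θ + s ^ 2) ^ (-(lam + 1)) ≤ (s ^ 2) ^ (-(lam + 1)) := by
    apply Real.rpow_le_rpow_of_nonpos (by positivity)
      (le_add_of_nonneg_left (bpK_nonneg hx hy θ)) (by linarith)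
  have h0 : 0 ≤ bpF lam x y s θ :=
    bpF_nonneg hx hy s θ ⟨hθ.1.le, hθ.2⟩
  show ‖bpF lam x y s θ‖ ≤ (s ^ 2) ^ (-(lam + 1)) * Real.sin θ ^ (2 * lam - 1)
  rw [Real.norm_eq_abs, abs_of_nonneg h0]
  unfold bpF
  rw [mul_comm ((s ^ 2) ^ (-(lam + 1)))]
  exact mul_le_mul_of_nonneg_left hb (Real.rpow_nonneg hsin _)

lemma bpF_hasDeriv (hx : 0 < x) (hy : 0 < y) {s : ℝ} (hs : s ≠ 0) (θ : ℝ) :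
    HasDerivAt (fun s => bpF lam x y s θ) (bpF' lam x y s θ) s := by
  have h1 : HasDerivAt (fun s : ℝ => bpK x y θ + s ^ 2) (2 * s) s := by
    simpa using (hasDerivAt_pow 2 s).const_add (bpK x y θ)
  have h2 := h1.rpow_const (p := -(lam + 1)) (Or.inl (bpD_pos hx hy hs θ).ne')
  have h3 := h2.const_mul (Real.sin θ ^ (2 * lam - 1))
  simpa [bpF, bpF', mul_assoc, mul_comm, mul_left_comm] using h3

end

end BesselAux

theorem bessel_poisson_kernel_time_deriv_bound (lam : ℝ) (hlam : 0 < lam) :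
    ∃ C : ℝ, 0 < C ∧ ∀ x y t : ℝ, 0 < x → 0 < y → 0 < t →
      |deriv (fun s : ℝ => besselPoissonKernel lam x y s) t| ≤
        (C / t) * besselPoissonKernel lam x y t := by
  refine ⟨2 * lam + 3, by linarith, fun x y t hx hy ht => ?_⟩
  have hπ := Real.pi_pos
  set c : ℝ := 2 * lam / π * (x * y) ^ lam with hcdef
  have hc0 : 0 < c :=
    mul_pos (div_pos (by linarith) hπ) (Real.rpow_pos_of_pos (mul_pos hx hy) _)
  have hPeq : ∀ s : ℝ, besselPoissonKernel lam x y s =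
      c * (s * ∫ θ in (0:ℝ)..π, bpF lam x y s θ) := by
    intro s
    have hInt : (∫ θ in (0:ℝ)..π, Real.sin θ ^ (2 * lam - 1) /
        ((x - y) ^ 2 + s ^ 2 + 2 * x * y * (1 - Real.cos θ)) ^ (lam + 1))
        = ∫ θ in (0:ℝ)..π, bpF lam x y s θ := by
      refine intervalIntegral.integral_congr fun θ _ => ?_
      have hb : (x - y) ^ 2 + s ^ 2 + 2 * x * y * (1 - Real.cos θ) = bpK x y θ + s ^ 2 := by
        unfold bpK; ring
      have hb0 : 0 ≤ bpK x y θ + s ^ 2 := add_nonneg (bpK_nonneg hx hy θ) (sq_nonneg s)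
      rw [hb]
      unfold bpF
      rw [Real.rpow_neg hb0, div_eq_mul_inv]
    unfold besselPoissonKernel
    rw [hInt, hcdef]
    ring
  have hε : (0:ℝ) < t / 2 := by linarith
  have hssub : ∀ s ∈ Metric.ball t (t / 2), t / 2 < s ∧ s < 2 * t := by
    intro s hs
    rw [Metric.mem_ball, Real.dist_eq, abs_sub_lt_iff] at hs
    constructor <;> linarith [hs.1, hs.2]
  obtain ⟨hF'int, hI⟩ : IntervalIntegrable (bpF' lam x y t) volume 0 π ∧
      HasDerivAt (fun s => ∫ θ in (0:ℝ)..π, bpF lam x y s θ)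
        (∫ θ in (0:ℝ)..π, bpF' lam x y t θ) t := by
    refine intervalIntegral.hasDerivAt_integral_of_dominated_loc_of_deriv_le (Metric.ball_mem_nhds t hε)
      (Eventually.of_forall fun s => bpF_meas hx hy s)
      (bpF_int hlam hx hy ht.ne') (bpF'_meas hx hy t)
      (bound := fun θ => (4 * t * (lam + 1) * ((t ^ 2 / 4) ^ (-(lam + 1) - 1))) *
        Real.sin θ ^ (2 * lam - 1)) ?_
      ((sin_rpow_ii (by linarith)).const_mul _) ?_
    · refine ae_of_all _ fun θ hθ s hs => ?_
      rw [uIoc_of_le pi_pos.le] at hθ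
      obtain ⟨hs1, hs2⟩ := hssub s hs
      have hs0 : 0 < s := lt_trans hε hs1
      have hsin : 0 ≤ Real.sin θ := Real.sin_nonneg_of_nonneg_of_le_pi hθ.1.le hθ.2
      have hBpos : 0 < bpK x y θ + s ^ 2 := bpD_pos hx hy hs0.ne' θ
      have hq : 0 ≤ Real.sin θ ^ (2 * lam - 1) := Real.rpow_nonneg hsin _
      have hBle : (bpK x y θ + s ^ 2) ^ (-(lam + 1) - 1) ≤ (t ^ 2 / 4) ^ (-(lam + 1) - 1) := by
        apply Real.rpow_le_rpow_of_nonpos (by positivity) ?_ (by linarith)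
        nlinarith [bpK_nonneg hx hy θ]
      show ‖bpF' lam x y s θ‖ ≤ _
      unfold bpF'
      rw [Real.norm_eq_abs, abs_mul, abs_of_nonneg hq, abs_mul, abs_mul,
        abs_of_pos (by linarith : (0:ℝ) < 2 * s), abs_neg,
        abs_of_pos (by linarith : (0:ℝ) < lam + 1),
        abs_of_nonneg (Real.rpow_nonneg hBpos.le _)]
      have h2s : 2 * s * (lam + 1) ≤ 4 * t * (lam + 1) := by nlinarith
      have hmain : 2 * s * (lam + 1) * (bpK x y θ + s ^ 2) ^ (-(lam + 1) - 1)
          ≤ 4 * t * (lam + 1) * (t ^ 2 / 4) ^ (-(lam + 1) - 1) :=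
        mul_le_mul h2s hBle (Real.rpow_nonneg hBpos.le _) (by positivity)
      show Real.sin θ ^ (2 * lam - 1) * (2 * s * (lam + 1) * (bpK x y θ + s ^ 2) ^ (-(lam + 1) - 1))
          ≤ 4 * t * (lam + 1) * (t ^ 2 / 4) ^ (-(lam + 1) - 1) * Real.sin θ ^ (2 * lam - 1)
      calc Real.sin θ ^ (2 * lam - 1) * (2 * s * (lam + 1) * (bpK x y θ + s ^ 2) ^ (-(lam + 1) - 1))
          ≤ Real.sin θ ^ (2 * lam - 1) * (4 * t * (lam + 1) * (t ^ 2 / 4) ^ (-(lam + 1) - 1)) :=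
            mul_le_mul_of_nonneg_left hmain hq
        _ = 4 * t * (lam + 1) * (t ^ 2 / 4) ^ (-(lam + 1) - 1) * Real.sin θ ^ (2 * lam - 1) :=
            mul_comm _ _
    · refine ae_of_all _ fun θ hθ s hs => ?_
      have hs0 : 0 < s := lt_trans hε (hssub s hs).1
      exact bpF_hasDeriv hx hy hs0.ne' θ
  set It := ∫ θ in (0:ℝ)..π, bpF lam x y t θ with hIt
  set I't := ∫ θ in (0:ℝ)..π, bpF' lam x y t θ with hI't
  have hIt0 : 0 ≤ It :=
    intervalIntegral.integral_nonneg pi_pos.le fun θ hθ => bpF_nonneg hx hy t θ hθ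
  have hptwise : ∀ θ ∈ Icc (0:ℝ) π,
      |bpF' lam x y t θ| ≤ (2 * (lam + 1) / t) * bpF lam x y t θ := by
    intro θ hθ
    have hB : 0 < bpK x y θ + t ^ 2 := bpD_pos hx hy ht.ne' θ
    have hsin : 0 ≤ Real.sin θ := Real.sin_nonneg_of_nonneg_of_le_pi hθ.1 hθ.2
    have hq : 0 ≤ Real.sin θ ^ (2 * lam - 1) := Real.rpow_nonneg hsin _
    have hstep : (bpK x y θ + t ^ 2) ^ (-(lam + 1) - 1)
        ≤ (bpK x y θ + t ^ 2) ^ (-(lam + 1)) / t ^ 2 := by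
      rw [Real.rpow_sub hB, Real.rpow_one]
      gcongr
      · exact le_add_of_nonneg_left (bpK_nonneg hx hy θ)
    unfold bpF' bpF
    rw [abs_mul, abs_of_nonneg hq, abs_mul, abs_mul,
      abs_of_pos (by linarith : (0:ℝ) < 2 * t), abs_neg,
      abs_of_pos (by linarith : (0:ℝ) < lam + 1),
      abs_of_nonneg (Real.rpow_nonneg hB.le _)]
    calc Real.sin θ ^ (2 * lam - 1) * (2 * t * (lam + 1) * (bpK x y θ + t ^ 2) ^ (-(lam + 1) - 1))
        ≤ Real.sin θ ^ (2 * lam - 1) *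
            (2 * t * (lam + 1) * ((bpK x y θ + t ^ 2) ^ (-(lam + 1)) / t ^ 2)) := by
          refine mul_le_mul_of_nonneg_left (mul_le_mul_of_nonneg_left hstep (by positivity)) hq
      _ = 2 * (lam + 1) / t * (Real.sin θ ^ (2 * lam - 1) * (bpK x y θ + t ^ 2) ^ (-(lam + 1))) := by
          field_simp
  have habs : |I't| ≤ (2 * (lam + 1) / t) * It := by
    calc |I't| ≤ ∫ θ in (0:ℝ)..π, |bpF' lam x y t θ| :=
          intervalIntegral.abs_integral_le_integral_abs pi_pos.le
      _ ≤ ∫ θ in (0:ℝ)..π, (2 * (lam + 1) / t) * bpF lam x y t θ :=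
          intervalIntegral.integral_mono_on pi_pos.le hF'int.abs
            ((bpF_int hlam hx hy ht.ne').const_mul _) hptwise
      _ = (2 * (lam + 1) / t) * It := intervalIntegral.integral_const_mul _ _
  have hP : HasDerivAt (fun s : ℝ => besselPoissonKernel lam x y s) (c * (It + t * I't)) t := by
    have h : HasDerivAt (fun s : ℝ => c * (s * ∫ θ in (0:ℝ)..π, bpF lam x y s θ))
        (c * (1 * It + id t * I't)) t := ((hasDerivAt_id t).mul hI).const_mul c
    have h2 : HasDerivAt (fun s : ℝ => c * (s * ∫ θ in (0:ℝ)..π, bpF lam x y s θ))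
        (c * (It + t * I't)) t := by
      convert h using 2
      simp
    exact h2.congr_of_eventuallyEq (Eventually.of_forall hPeq)
  rw [hP.deriv, hPeq t]
  rw [abs_mul, abs_of_pos hc0]
  have h1 : |It + t * I't| ≤ It + 2 * (lam + 1) * It := by
    calc |It + t * I't| ≤ |It| + |t * I't| := abs_add_le _ _
      _ = It + t * |I't| := by rw [abs_of_nonneg hIt0, abs_mul, abs_of_pos ht]
      _ ≤ It + t * ((2 * (lam + 1) / t) * It) :=
          add_le_add_right (mul_le_mul_of_nonneg_left habs ht.le) _
      _ = It + 2 * (lam + 1) * It := by field_simp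
  calc c * |It + t * I't| ≤ c * (It + 2 * (lam + 1) * It) :=
        mul_le_mul_of_nonneg_left h1 hc0.le
    _ = (2 * lam + 3) / t * (c * (t * It)) := by field_simp; ring
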